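/- Let β > 1 and let x, y ∈ ℝ² be distinct points. A point z ∈ ℝ² with z ∉ {x,y} lies in C_β(x,y) if and only if the angle ∠xzy of the triangle with vertices x, z, y at the vertex z is at least arcsin(1/β). -/

import Mathlib

open Metric Set EuclideanGeometry

def Cbeta (β : ℝ) (x y : EuclideanSpace ℝ (Fin 2)) : Set (EuclideanSpace ℝ (Fin 2)) :=
  {z | ∃ M : EuclideanSpace ℝ (Fin 2),
    dist M x = β * dist x y / 2 ∧ dist M y = β * dist x y / 2 ∧ dist z M ≤ β * dist x y / 2}

/-- Scalar core: the disk condition `c ≤ 2 h b` is equivalent to `c ≤ p q √(1 - 1/β²)`. -/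
lemma stmt4_scalar (β p q c d b h : ℝ) (hβ : 1 < β) (hp : 0 < p) (hq : 0 < q)
    (hd : 0 < d) (hb : 0 ≤ b) (hh : 0 ≤ h) (hh2 : h ^ 2 = (β ^ 2 - 1) * d ^ 2 / 4)
    (hbd : b ^ 2 * d ^ 2 = p ^ 2 * q ^ 2 - c ^ 2) :
    c ≤ 2 * h * b ↔ c ≤ p * q * Real.sqrt (1 - 1 / β ^ 2) := by
  have hβ0 : (0:ℝ) < β := lt_trans one_pos hβ
  have hk : (0:ℝ) ≤ 1 - 1 / β ^ 2 := by
    have : 1 / β ^ 2 ≤ 1 := by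
      rw [div_le_one (by positivity)]
      nlinarith
    linarith
  set s := Real.sqrt (1 - 1 / β ^ 2) with hs
  have hs0 : 0 ≤ s := Real.sqrt_nonneg _
  have hs2 : s ^ 2 = 1 - 1 / β ^ 2 := Real.sq_sqrt hk
  constructor
  · intro hcb
    rcases le_or_gt c 0 with hc0 | hc0
    · exact le_trans hc0 (by positivity)
    · -- c > 0 : square
      have h1 : c ^ 2 ≤ 4 * h ^ 2 * b ^ 2 := by nlinarith
      have h2 : c ^ 2 ≤ (p * q * s) ^ 2 := by
        have hβ2 : (0:ℝ) < β ^ 2 := by positivity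
        have : 4 * h ^ 2 * b ^ 2 = (β ^ 2 - 1) * (p ^ 2 * q ^ 2 - c ^ 2) := by
          rw [hh2]; linear_combination (β ^ 2 - 1) * hbd
        have h3 : c ^ 2 * β ^ 2 ≤ (β ^ 2 - 1) * (p ^ 2 * q ^ 2) := by nlinarith
        have : (p * q * s) ^ 2 = p ^ 2 * q ^ 2 * (1 - 1 / β ^ 2) := by
          rw [mul_pow, mul_pow, hs2]
        rw [this, ← sub_nonneg]
        have h4 : p ^ 2 * q ^ 2 * (1 - 1 / β ^ 2) - c ^ 2
            = ((β ^ 2 - 1) * (p ^ 2 * q ^ 2) - c ^ 2 * β ^ 2) / β ^ 2 := by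
          field_simp
        rw [h4]
        have h5 : 0 ≤ (β ^ 2 - 1) * (p ^ 2 * q ^ 2) - c ^ 2 * β ^ 2 := by linarith
        positivity
      nlinarith [mul_nonneg (mul_nonneg hp.le hq.le) hs0]
  · intro hcs
    rcases le_or_gt c 0 with hc0 | hc0
    · exact le_trans hc0 (by positivity)
    · have h2 : c ^ 2 ≤ p ^ 2 * q ^ 2 * (1 - 1 / β ^ 2) := by
        have h6 := mul_self_le_mul_self hc0.le hcs
        calc c ^ 2 = c * c := sq c
          _ ≤ (p * q * s) * (p * q * s) := h6
          _ = p ^ 2 * q ^ 2 * s ^ 2 := by ring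
          _ = p ^ 2 * q ^ 2 * (1 - 1 / β ^ 2) := by rw [hs2]
      have hβ2 : (0:ℝ) < β ^ 2 := by positivity
      have h8 : (1 - 1 / β ^ 2) * β ^ 2 = β ^ 2 - 1 := by
        field_simp
      have h3 : c ^ 2 * β ^ 2 ≤ p ^ 2 * q ^ 2 * (β ^ 2 - 1) := by
        have h7 := mul_le_mul_of_nonneg_right h2 (le_of_lt hβ2)
        calc c ^ 2 * β ^ 2 ≤ p ^ 2 * q ^ 2 * (1 - 1 / β ^ 2) * β ^ 2 := h7
          _ = p ^ 2 * q ^ 2 * ((1 - 1 / β ^ 2) * β ^ 2) := by ring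
          _ = p ^ 2 * q ^ 2 * (β ^ 2 - 1) := by rw [h8]
      have h1 : c ^ 2 ≤ 4 * h ^ 2 * b ^ 2 := by
        have h10 : 4 * h ^ 2 * b ^ 2 = (β ^ 2 - 1) * (p ^ 2 * q ^ 2 - c ^ 2) := by
          rw [hh2]; linear_combination (β ^ 2 - 1) * hbd
        have h9 : (β ^ 2 - 1) * (p ^ 2 * q ^ 2 - c ^ 2) - c ^ 2
            = p ^ 2 * q ^ 2 * (β ^ 2 - 1) - c ^ 2 * β ^ 2 := by ring
        rw [h10]
        linarith [h3, h9]
      nlinarith [mul_nonneg hh hb, sq_nonneg (2 * h * b - c), sq_nonneg (2 * h * b + c)]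

lemma stmt4_eq_of_sq {a b : ℝ} (ha : 0 ≤ a) (hb : 0 ≤ b) (h : a ^ 2 = b ^ 2) : a = b := by
  rw [← Real.sqrt_sq ha, h, Real.sqrt_sq hb]

lemma stmt4_le_of_sq {a b : ℝ} (ha : 0 ≤ a) (hb : 0 ≤ b) (h : a ^ 2 ≤ b ^ 2) : a ≤ b := by
  rw [← Real.sqrt_sq ha, ← Real.sqrt_sq hb]
  exact Real.sqrt_le_sqrt h

set_option maxHeartbeats 1000000 in
theorem stmt4 (β : ℝ) (hβ : 1 < β) (x y z : EuclideanSpace ℝ (Fin 2))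
    (hxy : x ≠ y) (hzx : z ≠ x) (hzy : z ≠ y) :
    z ∈ Cbeta β x y ↔ Real.arcsin (1 / β) ≤ EuclideanGeometry.angle x z y := by
  classical
  have hβ0 : (0:ℝ) < β := lt_trans one_pos hβ
  set v : EuclideanSpace ℝ (Fin 2) := x - z with hv
  set w : EuclideanSpace ℝ (Fin 2) := y - z with hw
  set p := ‖v‖ with hpdef
  set q := ‖w‖ with hqdef
  set c : ℝ := inner ℝ v w with hcdef
  have hp : 0 < p := by
    rw [hpdef, norm_pos_iff]; exact sub_ne_zero.mpr (Ne.symm hzx)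
  have hq : 0 < q := by
    rw [hqdef, norm_pos_iff]; exact sub_ne_zero.mpr (Ne.symm hzy)
  set d := dist x y with hddef
  have hd : 0 < d := dist_pos.mpr hxy
  have hdxy : d = ‖v - w‖ := by
    rw [hddef, dist_eq_norm, hv, hw]; congr 1; abel
  have hd2 : d ^ 2 = p ^ 2 - 2 * c + q ^ 2 := by
    rw [hdxy, norm_sub_sq_real]
  -- midpoint and the shifted vector e
  set m : EuclideanSpace ℝ (Fin 2) := midpoint ℝ x y with hm
  set e : EuclideanSpace ℝ (Fin 2) := z - m with he
  have heval : e = (-(2:ℝ)⁻¹) • (v + w) := by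
    rw [he, hm, midpoint_eq_smul_add, invOf_eq_inv, hv, hw]
    module
  set S := ‖e‖ ^ 2 with hS
  have hSval : S = (p ^ 2 + 2 * c + q ^ 2) / 4 := by
    rw [hS, heval, norm_smul, mul_pow, norm_add_sq_real, ← hpdef, ← hqdef, ← hcdef,
      Real.norm_eq_abs, sq_abs]
    ring
  set D : EuclideanSpace ℝ (Fin 2) := y - x with hD
  have hDval : D = w - v := by rw [hD, hv, hw]; abel
  have hnD : ‖D‖ = d := by rw [hD, hddef, dist_eq_norm, norm_sub_rev]
  have heD : inner ℝ e D = (p ^ 2 - q ^ 2) / 2 := by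
    rw [heval, hDval, real_inner_smul_left, inner_sub_right, inner_add_left, inner_add_left]
    rw [real_inner_self_eq_norm_sq, real_inner_self_eq_norm_sq, real_inner_comm w v,
      ← hpdef, ← hqdef]
    ring
  set a : ℝ := ((p ^ 2 - q ^ 2) / 2) / d ^ 2 with ha
  set e' : EuclideanSpace ℝ (Fin 2) := e - a • D with he'
  have hDe' : inner ℝ D e' = (0:ℝ) := by
    rw [he', inner_sub_right, real_inner_smul_right, real_inner_self_eq_norm_sq, hnD,
      real_inner_comm, heD, ha]
    field_simp
    ring
  set b := ‖e'‖ with hb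
  have hb0 : 0 ≤ b := norm_nonneg _
  have hbval : b ^ 2 = S - a ^ 2 * d ^ 2 := by
    have h9 : b ^ 2 = S - 2 * (a * ((p ^ 2 - q ^ 2) / 2)) + a ^ 2 * d ^ 2 := by
      rw [hb, he', norm_sub_sq_real, real_inner_smul_right, heD, norm_smul, mul_pow,
        Real.norm_eq_abs, sq_abs, hnD, ← hS]
    rw [h9, ha]
    field_simp
    ring
  have had : a * d ^ 2 = (p ^ 2 - q ^ 2) / 2 := by
    rw [ha]; field_simp
  have hbd : b ^ 2 * d ^ 2 = p ^ 2 * q ^ 2 - c ^ 2 := by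
    have h11 : b ^ 2 * d ^ 2 = S * d ^ 2 - (a * d ^ 2) ^ 2 := by rw [hbval]; ring
    rw [h11, had, hSval, hd2]
    ring
  have hcS : c = S - d ^ 2 / 4 := by rw [hSval, hd2]; ring
  have hee' : inner ℝ e e' = b ^ 2 := by
    have h5 : e = e' + a • D := by rw [he']; abel
    calc (inner ℝ e e' : ℝ) = inner ℝ (e' + a • D) e' := by rw [← h5]
      _ = inner ℝ e' e' + a * inner ℝ D e' := by rw [inner_add_left, real_inner_smul_left]
      _ = b ^ 2 := by rw [hDe', real_inner_self_eq_norm_sq, ← hb]; ring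
  -- the angle condition as a scalar inequality
  have hangle : EuclideanGeometry.angle x z y = Real.arccos (c / (p * q)) := by
    rw [EuclideanGeometry.angle, InnerProductGeometry.angle, vsub_eq_sub, vsub_eq_sub,
      ← hv, ← hw, ← hcdef, ← hpdef, ← hqdef]
  have hcs : |c / (p * q)| ≤ 1 := by
    rw [abs_div, div_le_one (by positivity)]
    calc |c| ≤ ‖v‖ * ‖w‖ := abs_real_inner_le_norm v w
      _ = |p * q| := by rw [abs_of_pos (by positivity : (0:ℝ) < p * q), hpdef, hqdef]
  have hcs1 : -1 ≤ c / (p * q) := by have := abs_le.mp hcs; exact this.1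
  have hcs2 : c / (p * q) ≤ 1 := (abs_le.mp hcs).2
  have hβinv : 0 ≤ 1 / β := by positivity
  have hβinv1 : 1 / β ≤ 1 := by
    rw [div_le_one hβ0]; exact le_of_lt hβ
  have harc : Real.arcsin (1 / β) ≤ EuclideanGeometry.angle x z y ↔
      c ≤ p * q * Real.sqrt (1 - 1 / β ^ 2) := by
    rw [hangle]
    have hmem1 : Real.arcsin (1 / β) ∈ Set.Icc 0 Real.pi :=
      ⟨Real.arcsin_nonneg.mpr hβinv, le_trans (Real.arcsin_le_pi_div_two _)
        (by linarith [Real.pi_pos])⟩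
    have hmem2 : Real.arccos (c / (p * q)) ∈ Set.Icc 0 Real.pi :=
      ⟨Real.arccos_nonneg _, Real.arccos_le_pi _⟩
    rw [← Real.strictAntiOn_cos.le_iff_ge hmem2 hmem1]
    rw [Real.cos_arccos hcs1 hcs2, Real.cos_arcsin]
    have : (1 / β) ^ 2 = 1 / β ^ 2 := by ring
    rw [this, div_le_iff₀ (by positivity : (0:ℝ) < p * q)]
    rw [mul_comm (Real.sqrt _) (p * q)]
  rw [harc]
  -- h : the half-chord height
  set h : ℝ := d / 2 * Real.sqrt (β ^ 2 - 1) with hh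
  have hh0 : 0 ≤ h := by positivity
  have hh2 : h ^ 2 = (β ^ 2 - 1) * d ^ 2 / 4 := by
    rw [hh, mul_pow, Real.sq_sqrt (by nlinarith : (0:ℝ) ≤ β ^ 2 - 1)]
    ring
  suffices hmain : z ∈ Cbeta β x y ↔ c ≤ 2 * h * b by
    exact hmain.trans (stmt4_scalar β p q c d b h hβ hp hq hd hb0 hh0 hh2 hbd)
  have hR2 : (β * d / 2) ^ 2 = h ^ 2 + d ^ 2 / 4 := by rw [hh2]; ring
  simp only [Cbeta, Set.mem_setOf_eq]
  have hmx : m - x = (2:ℝ)⁻¹ • D := by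
    rw [hm, hD, midpoint_eq_smul_add, invOf_eq_inv]
    module
  have hmy : m - y = -((2:ℝ)⁻¹ • D) := by
    rw [hm, hD, midpoint_eq_smul_add, invOf_eq_inv]
    module
  have hnD2 : ‖(2:ℝ)⁻¹ • D‖ ^ 2 = d ^ 2 / 4 := by
    rw [norm_smul, mul_pow, hnD, Real.norm_eq_abs, sq_abs]
    ring
  constructor
  · -- z ∈ C ⟹ scalar
    rintro ⟨M, h1, h2, h3⟩
    rw [← hddef] at h1 h2 h3
    set t : EuclideanSpace ℝ (Fin 2) := M - m with ht
    have hMx : M - x = t + (2:ℝ)⁻¹ • D := by rw [ht, ← hmx]; abel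
    have hMy : M - y = t - (2:ℝ)⁻¹ • D := by
      have h40 : M - y = t + (m - y) := by rw [ht]; abel
      rw [h40, hmy]; abel
    have e1 : ‖t‖ ^ 2 + 2 * inner ℝ t ((2:ℝ)⁻¹ • D) + d ^ 2 / 4 = (β * d / 2) ^ 2 := by
      rw [← hnD2, ← norm_add_sq_real, ← hMx, ← dist_eq_norm, h1]
    have e2 : ‖t‖ ^ 2 - 2 * inner ℝ t ((2:ℝ)⁻¹ • D) + d ^ 2 / 4 = (β * d / 2) ^ 2 := by
      rw [← hnD2, ← norm_sub_sq_real, ← hMy, ← dist_eq_norm, h2]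
    have htD : inner ℝ t ((2:ℝ)⁻¹ • D) = (0:ℝ) := by linarith only [e1, e2]
    have ht2 : ‖t‖ ^ 2 = h ^ 2 := by rw [hR2] at e1; linarith only [e1, htD]
    have htD' : inner ℝ t D = (0:ℝ) := by
      have := htD
      rw [real_inner_smul_right] at this
      linarith
    -- z - M = e - t
    have hzM : z - M = e - t := by rw [he, ht]; abel
    have e3 : S - 2 * inner ℝ e t + ‖t‖ ^ 2 ≤ (β * d / 2) ^ 2 := by
      have h31 : ‖e - t‖ ^ 2 ≤ (β * d / 2) ^ 2 := by
        rw [← hzM, ← dist_eq_norm]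
        exact pow_le_pow_left₀ dist_nonneg h3 2
      rw [norm_sub_sq_real] at h31
      rw [← hS] at h31
      linarith only [h31]
    have htD2 : (inner ℝ D t : ℝ) = 0 := by rw [real_inner_comm t D]; exact htD'
    have het : inner ℝ e t ≤ h * b := by
      have h41 : (inner ℝ e' t : ℝ) = inner ℝ e t - a * inner ℝ D t := by
        rw [he', inner_sub_left, real_inner_smul_left]
      have h42 : (inner ℝ e t : ℝ) = inner ℝ e' t := by
        rw [htD2] at h41; linarith only [h41]
      rw [h42]
      calc (inner ℝ e' t : ℝ) ≤ ‖e'‖ * ‖t‖ := real_inner_le_norm e' t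
        _ = h * b := by
            rw [← hb]
            have h32 : ‖t‖ = h := stmt4_eq_of_sq (norm_nonneg t) hh0 ht2
            rw [h32]; ring
    rw [hcS]
    rw [hR2] at e3
    linarith only [e3, het, ht2]
  · -- scalar ⟹ z ∈ C
    intro hcb
    -- construct t with ⟪D,t⟫ = 0, ‖t‖² = h², ⟪e,t⟫ = h*b
    have hkey : ∃ t : EuclideanSpace ℝ (Fin 2),
        inner ℝ D t = (0:ℝ) ∧ ‖t‖ ^ 2 = h ^ 2 ∧ inner ℝ e t = h * b := by
      by_cases hb0' : b = 0
      · -- use a rotated vector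
        set n : EuclideanSpace ℝ (Fin 2) :=
          (WithLp.equiv 2 (Fin 2 → ℝ)).symm ![-(D 1), D 0] with hn
        have hn0 : n 0 = -(D 1) := by rw [hn]; rfl
        have hn1 : n 1 = D 0 := by rw [hn]; rfl
        have hDn : inner ℝ D n = (0:ℝ) := by
          rw [PiLp.inner_apply, Fin.sum_univ_two, hn0, hn1]
          simp [RCLike.inner_apply]
          ring
        have hnn : ‖n‖ ^ 2 = d ^ 2 := by
          rw [← real_inner_self_eq_norm_sq, PiLp.inner_apply, Fin.sum_univ_two, hn0, hn1]
          rw [← hnD, ← real_inner_self_eq_norm_sq, PiLp.inner_apply, Fin.sum_univ_two]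
          simp [RCLike.inner_apply]
          ring
        refine ⟨(h / d) • n, ?_, ?_, ?_⟩
        · rw [real_inner_smul_right, hDn]; ring
        · rw [norm_smul, mul_pow, hnn]
          rw [Real.norm_eq_abs, sq_abs, div_pow]
          field_simp
        · have he'0 : e' = 0 := by
            rw [he'] at *
            have : ‖e - a • D‖ = 0 := by rw [← hb]; exact hb0'
            exact norm_eq_zero.mp this
          have heaD : e = a • D := by
            have := he'0
            rw [he', sub_eq_zero] at this
            exact this
          rw [heaD, real_inner_smul_left, real_inner_smul_right, hDn, hb0']
          ring
      · refine ⟨(h / b) • e', ?_, ?_, ?_⟩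
        · rw [real_inner_smul_right, hDe']; ring
        · rw [norm_smul, mul_pow, ← hb, Real.norm_eq_abs, sq_abs, div_pow]
          field_simp
        · rw [real_inner_smul_right, hee']
          field_simp
    obtain ⟨t, htD, ht2, het⟩ := hkey
    refine ⟨m + t, ?_, ?_, ?_⟩ <;> rw [← hddef]
    · -- dist (m+t) x = β d / 2
      have : m + t - x = t + (2:ℝ)⁻¹ • D := by rw [← hmx]; abel
      have hsq : dist (m + t) x ^ 2 = (β * d / 2) ^ 2 := by
        rw [dist_eq_norm, this, norm_add_sq_real, real_inner_smul_right, real_inner_comm,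
          htD, hnD2, ht2, hR2]
        ring
      have hR0 : 0 ≤ β * d / 2 := by positivity
      exact stmt4_eq_of_sq dist_nonneg hR0 hsq
    · have : m + t - y = t - (2:ℝ)⁻¹ • D := by
        have h43 : m + t - y = t + (m - y) := by abel
        rw [h43, hmy]; abel
      have hsq : dist (m + t) y ^ 2 = (β * d / 2) ^ 2 := by
        rw [dist_eq_norm, this, norm_sub_sq_real, real_inner_smul_right, real_inner_comm,
          htD, hnD2, ht2, hR2]
        ring
      have hR0 : 0 ≤ β * d / 2 := by positivity
      exact stmt4_eq_of_sq dist_nonneg hR0 hsq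
    · have hzM : z - (m + t) = e - t := by rw [he]; abel
      have hsq : dist z (m + t) ^ 2 ≤ (β * d / 2) ^ 2 := by
        rw [dist_eq_norm, hzM, norm_sub_sq_real, ← hS, het, ht2, hR2]
        rw [hcS] at hcb
        linarith only [hcb]
      have hR0 : 0 ≤ β * d / 2 := by positivity
      exact stmt4_le_of_sq dist_nonneg hR0 hsq
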